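/- Let F : ℂⁿ → ℂ be real-differentiable at a point z. Then fderiv ℝ F z : ℂⁿ → ℂ is not surjective if and only if there exists λ ∈ ℂ with |λ| = 1 such that conj(∂F(z)) = λ·∂̄F(z) as vectors in ℂⁿ, where ∂F(z) and ∂̄F(z) are the Wirtinger gradients of F at z. (Characterisation (2.2) of the singular locus of a mixed function; it follows from Lemma 2.1, since the real 2-plane {μ·conj(∂F(z)) + conj(μ)·∂̄F(z) : μ ∈ ℂ} degenerates exactly under this condition.) -/

import Mathlib

open Complex Filter Function Metric

noncomputable section

/-- `ℂⁿ` with its Euclidean (Hermitian) norm. -/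
abbrev Cn (n : ℕ) := EuclideanSpace ℂ (Fin n)

/-- Componentwise complex conjugate of a vector in `ℂⁿ`. -/
def conjVec {n : ℕ} (v : Cn n) : Cn n := WithLp.toLp 2 (fun k => starRingEnd ℂ (v k))

/-- The Wirtinger gradient `∂F(z)`, with components
`∂F/∂z_k(z) = ½(L(e_k) − i·L(i·e_k))` where `L = fderiv ℝ F z`. -/
def wirtD {n : ℕ} (F : Cn n → ℂ) (z : Cn n) : Cn n :=
  WithLp.toLp 2 (fun k => (1 / 2 : ℂ) * (fderiv ℝ F z (EuclideanSpace.single k 1)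
    - Complex.I * fderiv ℝ F z (EuclideanSpace.single k Complex.I)))

/-- The Wirtinger gradient `∂̄F(z)`, with components
`∂F/∂z̄_k(z) = ½(L(e_k) + i·L(i·e_k))` where `L = fderiv ℝ F z`. -/
def wirtDBar {n : ℕ} (F : Cn n → ℂ) (z : Cn n) : Cn n :=
  WithLp.toLp 2 (fun k => (1 / 2 : ℂ) * (fderiv ℝ F z (EuclideanSpace.single k 1)
    + Complex.I * fderiv ℝ F z (EuclideanSpace.single k Complex.I)))

lemma wirt_master {n : ℕ} (F : Cn n → ℂ) (z : Cn n) (v : Cn n) :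
    fderiv ℝ F z v = inner (𝕜 := ℂ) (conjVec (wirtD F z)) v
      + starRingEnd ℂ (inner (𝕜 := ℂ) (wirtDBar F z) v) := by
  set L := fderiv ℝ F z with hL
  have hsingle : ∀ (k : Fin n) (c : ℂ),
      L (EuclideanSpace.single k c) =
        wirtD F z k * c + wirtDBar F z k * starRingEnd ℂ c := by
    intro k c
    have hdec : (EuclideanSpace.single k c : Cn n)
        = (c.re : ℝ) • EuclideanSpace.single k (1:ℂ)
          + (c.im : ℝ) • EuclideanSpace.single k Complex.I := by
      ext j
      by_cases h : j = k <;>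
        simp [EuclideanSpace.single_apply, h, Complex.real_smul, Complex.re_add_im]
    rw [hdec, map_add, map_smul, map_smul]
    set p := L (EuclideanSpace.single k (1:ℂ)) with hp
    set q := L (EuclideanSpace.single k Complex.I) with hq
    obtain ⟨cx, cy⟩ := c
    have hcc : (starRingEnd ℂ) ((cx : ℂ) + (cy : ℂ) * Complex.I)
        = (cx : ℂ) - (cy : ℂ) * Complex.I := by
      simp [Complex.ext_iff]
    have hc : (Complex.mk cx cy) = (cx : ℂ) + (cy : ℂ) * Complex.I :=
      Complex.mk_eq_add_mul_I cx cy
    simp only [wirtD, wirtDBar, PiLp.toLp_apply, ← hL, ← hp, ← hq, Complex.real_smul, hc, hcc]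
    linear_combination ((cy : ℂ) * q) * Complex.I_sq
  have hvsum : v = ∑ k, EuclideanSpace.single k (v k) := by
    ext j
    rw [WithLp.ofLp_sum, Finset.sum_apply]
    simp [EuclideanSpace.single_apply]
  conv_lhs => rw [hvsum]
  rw [map_sum, PiLp.inner_apply, PiLp.inner_apply, map_sum, ← Finset.sum_add_distrib]
  refine Finset.sum_congr rfl fun k _ => ?_
  rw [hsingle]
  simp [conjVec, PiLp.toLp_apply, RCLike.inner_apply, mul_comm]

lemma scalar_solve (α : ℝ) (β c : ℂ)
    (hd : ((α:ℂ)^2 - β * (starRingEnd ℂ) β) ≠ 0) :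
    (α:ℂ) * (((α:ℂ) * c - β * (starRingEnd ℂ) c) / ((α:ℂ)^2 - β * (starRingEnd ℂ) β))
      + β * (starRingEnd ℂ) (((α:ℂ) * c - β * (starRingEnd ℂ) c)
          / ((α:ℂ)^2 - β * (starRingEnd ℂ) β)) = c := by
  have h1 : (starRingEnd ℂ) (((α:ℂ) * c - β * (starRingEnd ℂ) c)
        / ((α:ℂ)^2 - β * (starRingEnd ℂ) β))
      = ((α:ℂ) * (starRingEnd ℂ) c - (starRingEnd ℂ) β * c)
          / ((α:ℂ)^2 - (starRingEnd ℂ) β * β) := by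
    simp [map_div₀, map_sub, map_mul, map_pow, Complex.conj_ofReal]
  have hd2 : ((α:ℂ)^2 - (starRingEnd ℂ) β * β) ≠ 0 := by
    rw [mul_comm]; exact hd
  rw [h1]
  field_simp
  ring

lemma eq_case {n : ℕ} (x y : Cn n)
    (h : ‖2 * inner (𝕜 := ℂ) x y‖ = ‖x‖^2 + ‖y‖^2) :
    ∃ lam : ℂ, ‖lam‖ = 1 ∧ x = lam • y := by
  by_cases hy : y = 0
  · subst hy
    have hx : ‖x‖ = 0 := by
      simp only [inner_zero_right, mul_zero, norm_zero, norm_zero, sq] at h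
      nlinarith [norm_nonneg x]
    exact ⟨1, by norm_num, by simp [norm_eq_zero.mp hx]⟩
  by_cases hx : x = 0
  · exfalso
    subst hx
    simp only [inner_zero_left, mul_zero, norm_zero] at h
    have : ‖y‖ = 0 := by nlinarith [norm_nonneg y]
    exact hy (norm_eq_zero.mp this)
  have hCS : ‖inner (𝕜 := ℂ) x y‖ ≤ ‖x‖ * ‖y‖ := norm_inner_le_norm x y
  have h2 : ‖2 * inner (𝕜 := ℂ) x y‖ = 2 * ‖inner (𝕜 := ℂ) x y‖ := by
    rw [norm_mul]; norm_num
  rw [h2] at h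
  have hn : ‖x‖ = ‖y‖ := by nlinarith [sq_nonneg (‖x‖ - ‖y‖)]
  have heq : ‖inner (𝕜 := ℂ) x y‖ = ‖x‖ * ‖y‖ := by nlinarith
  obtain ⟨r, hr0, hxy⟩ := (norm_inner_eq_norm_iff hx hy).1 heq
  have hny : ‖y‖ ≠ 0 := fun h0 => hy (norm_eq_zero.mp h0)
  have hrn : ‖r‖ = 1 := by
    have h3 : ‖y‖ = ‖r‖ * ‖x‖ := by rw [hxy, norm_smul]
    rw [hn] at h3
    exact (mul_right_cancel₀ hny (by linarith : (1:ℝ) * ‖y‖ = ‖r‖ * ‖y‖)).symm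
  refine ⟨r⁻¹, by rw [norm_inv, hrn]; norm_num, ?_⟩
  rw [hxy, smul_smul, inv_mul_cancel₀ hr0, one_smul]

/-- **Characterisation (2.2) of the singular locus of a mixed function.**  For
`F : ℂⁿ → ℂ` real-differentiable at `z`, the derivative `fderiv ℝ F z : ℂⁿ → ℂ` fails to
be surjective if and only if `conj(∂F(z)) = λ·∂̄F(z)` for some `λ ∈ ℂ` with `|λ| = 1`. -/
theorem not_surjective_iff_wirtinger_proportional
    {n : ℕ} (F : Cn n → ℂ) (z : Cn n) (hF : DifferentiableAt ℝ F z) :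
    ¬ Surjective ⇑(fderiv ℝ F z) ↔
      ∃ lam : ℂ, ‖lam‖ = 1 ∧ conjVec (wirtD F z) = lam • wirtDBar F z := by
  classical
  set x := conjVec (wirtD F z) with hxdef
  set b := wirtDBar F z with hbdef
  have master : ∀ v, fderiv ℝ F z v
      = inner (𝕜 := ℂ) x v + starRingEnd ℂ (inner (𝕜 := ℂ) b v) :=
    wirt_master F z
  constructor
  · intro hns
    by_contra hno
    push_neg at hno
    apply hns
    set γ : ℂ := inner (𝕜 := ℂ) x b with hγdef
    set α : ℝ := ‖x‖^2 + ‖b‖^2 with hαdef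
    set β : ℂ := 2 * γ with hβdef
    have hle : ‖β‖ ≤ α := by
      have h1 : ‖γ‖ ≤ ‖x‖ * ‖b‖ := norm_inner_le_norm x b
      have h2 : ‖β‖ = 2 * ‖γ‖ := by
        rw [hβdef, norm_mul]; norm_num
      nlinarith [sq_nonneg (‖x‖ - ‖b‖)]
    have hne : ‖β‖ ≠ α := by
      intro heqq
      obtain ⟨lam, h1, h2⟩ := eq_case x b (by rw [← hγdef, ← hβdef, heqq, hαdef])
      exact hno lam h1 h2
    have hlt : ‖β‖ < α := lt_of_le_of_ne hle hne
    intro c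
    have hd : ((α:ℂ)^2 - β * (starRingEnd ℂ) β) ≠ 0 := by
      have h0 : (0:ℝ) < α^2 - ‖β‖^2 := by nlinarith [norm_nonneg β]
      rw [Complex.mul_conj]
      intro hcontra
      have hc2 : ((α^2 - Complex.normSq β : ℝ) : ℂ) = 0 := by push_cast; linear_combination hcontra
      rw [Complex.ofReal_eq_zero] at hc2
      rw [Complex.normSq_eq_norm_sq] at hc2
      linarith
    set t : ℂ := ((α:ℂ) * c - β * (starRingEnd ℂ) c)
        / ((α:ℂ)^2 - β * (starRingEnd ℂ) β) with htdef
    refine ⟨t • x + (starRingEnd ℂ t) • b, ?_⟩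
    have hxx : inner (𝕜 := ℂ) x x = ((‖x‖^2 : ℝ) : ℂ) := by
      exact_mod_cast inner_self_eq_norm_sq_to_K (𝕜 := ℂ) x
    have hbb : inner (𝕜 := ℂ) b b = ((‖b‖^2 : ℝ) : ℂ) := by
      exact_mod_cast inner_self_eq_norm_sq_to_K (𝕜 := ℂ) b
    have hexp : fderiv ℝ F z (t • x + (starRingEnd ℂ t) • b)
        = (α:ℂ) * t + β * (starRingEnd ℂ) t := by
      rw [master]
      rw [inner_add_right, inner_add_right, inner_smul_right, inner_smul_right,
        inner_smul_right, inner_smul_right, map_add, map_mul, map_mul]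
      rw [hxx, hbb, inner_conj_symm, Complex.conj_conj, ← hγdef, Complex.conj_ofReal]
      rw [hαdef, hβdef, Complex.ofReal_add]
      ring
    rw [hexp]
    exact scalar_solve α β c hd
  · rintro ⟨lam, hnorm, heq⟩ hsurj
    obtain ⟨μ, hμ2⟩ := IsAlgClosed.exists_pow_nat_eq lam (n := 2) (by norm_num)
    have hμn : ‖μ‖ = 1 := by
      have h1 : ‖μ‖^2 = 1 := by rw [← norm_pow, hμ2, hnorm]
      nlinarith [norm_nonneg μ]
    have hμc : μ * starRingEnd ℂ μ = 1 := by
      rw [Complex.mul_conj]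
      rw [Complex.normSq_eq_norm_sq, hμn]
      norm_num
    have key : ∀ v, ∃ r : ℝ, fderiv ℝ F z v = (r:ℂ) * starRingEnd ℂ μ := by
      intro v
      refine ⟨2 * (starRingEnd ℂ μ * inner (𝕜 := ℂ) b v).re, ?_⟩
      rw [master]
      have hxv : inner (𝕜 := ℂ) x v = starRingEnd ℂ lam * inner (𝕜 := ℂ) b v := by
        rw [heq, inner_smul_left]
      set s := inner (𝕜 := ℂ) b v with hsdef
      rw [hxv]
      have hre : ((2 * (starRingEnd ℂ μ * s).re : ℝ) : ℂ)
          = starRingEnd ℂ μ * s + starRingEnd ℂ (starRingEnd ℂ μ * s) := by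
        rw [Complex.add_conj]
      rw [hre, map_mul, Complex.conj_conj]
      have hconjlam : starRingEnd ℂ lam = starRingEnd ℂ μ * starRingEnd ℂ μ := by
        rw [← hμ2, map_pow]; ring
      linear_combination s * hconjlam - (starRingEnd ℂ s) * hμc
    obtain ⟨v, hv⟩ := hsurj (Complex.I * starRingEnd ℂ μ)
    obtain ⟨r, hr⟩ := key v
    have hμne : starRingEnd ℂ μ ≠ 0 := by
      simp only [ne_eq, map_eq_zero]
      intro h0
      rw [h0] at hμn; simp at hμn
    have hRI : (r:ℂ) = Complex.I := mul_right_cancel₀ hμne (hr.symm.trans hv)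
    have := congrArg Complex.im hRI
    simp at this
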